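/- For k = 1,2 let a_k > 0, ε > 0, let 𝒫_k : (0,∞)×ℝ → ℝ be differentiable and e_k differentiable with ∂_τ e_k(τ,s) = −𝒫_k(τ,s). Let α₁, ρ_k, u_k, s_k, 𝒯_k be C¹ functions of (x,t) with α₁ ∈ (0,1), ρ_k > 0, set α₂ = 1−α₁, τ_k = 1/ρ_k, π_k = 𝒫_k(𝒯_k,s_k) + a_k²(𝒯_k − τ_k), and suppose they satisfy pointwise the relaxation system with source: ∂_tα₁ + u₂∂_xα₁ = 0; ∂_t(α_kρ_k) + ∂_x(α_kρ_ku_k) = 0; ∂_t(α_kρ_ku_k) + ∂_x(α_kρ_ku_k² + α_kπ_k) − π₁∂_xα_k = 0; ∂_t(α_kρ_ks_k) + ∂_x(α_kρ_ks_ku_k) = 0; ∂_t(α_kρ_k𝒯_k) + ∂_x(α_kρ_k𝒯_ku_k) = (1/ε)α_kρ_k(τ_k − 𝒯_k). Then, with ℰ_k := u_k²/2 + e_k(𝒯_k,s_k) + (π_k² − 𝒫_k(𝒯_k,s_k)²)/(2a_k²), the following energy balance holds for k = 1,2: ∂_t(α_kρ_kℰ_k) + ∂_x(α_kρ_kℰ_ku_k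 + α_kπ_ku_k) − u₂π₁∂_xα_k = −(1/ε)α_kρ_k(a_k² + ∂_τ𝒫_k(𝒯_k,s_k))(τ_k − 𝒯_k)²; in particular the right-hand side is nonpositive under Whitham's condition a_k² > −∂_τ𝒫_k(𝒯_k,s_k). -/

import Mathlib

noncomputable section

/-- Partial derivative with respect to the space variable `x`. -/
def pdx (f : ℝ → ℝ → ℝ) (x t : ℝ) : ℝ := deriv (fun y => f y t) x

/-- Partial derivative with respect to the time variable `t`. -/
def pdt (f : ℝ → ℝ → ℝ) (x t : ℝ) : ℝ := deriv (fun s => f x s) t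

/-- The space-time domain `ℝ × (0,∞)`. -/
def upperHalf : Set (ℝ × ℝ) := Set.univ ×ˢ Set.Ioi (0 : ℝ)

lemma upperHalf_open : IsOpen upperHalf := isOpen_univ.prod isOpen_Ioi

lemma clm_pair (L : ℝ × ℝ →L[ℝ] ℝ) (p q : ℝ) :
    L (p, q) = p * L (1, 0) + q * L (0, 1) := by
  have h : (p, q) = p • ((1:ℝ), (0:ℝ)) + q • ((0:ℝ), (1:ℝ)) := by
    simp [Prod.ext_iff]
  rw [h, map_add, map_smul, map_smul, smul_eq_mul, smul_eq_mul]

set_option maxHeartbeats 2000000 in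
lemma phase_balance
    (a ε : ℝ) (ha : 0 < a) (hε : 0 < ε)
    (P e : ℝ → ℝ → ℝ)
    (hP : ∀ τ σ : ℝ, 0 < τ →
      DifferentiableAt ℝ (fun q : ℝ × ℝ => P q.1 q.2) (τ, σ))
    (he : ∀ τ σ : ℝ, 0 < τ →
      DifferentiableAt ℝ (fun q : ℝ × ℝ => e q.1 q.2) (τ, σ)
        ∧ HasDerivAt (fun τ' => e τ' σ) (-(P τ σ)) τ)
    (α ρ u s T : ℝ → ℝ → ℝ) (x t : ℝ) (ht : 0 < t)
    (hα : ContDiffOn ℝ 1 (fun q : ℝ × ℝ => α q.1 q.2) upperHalf)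
    (hρ : ContDiffOn ℝ 1 (fun q : ℝ × ℝ => ρ q.1 q.2) upperHalf)
    (hu : ContDiffOn ℝ 1 (fun q : ℝ × ℝ => u q.1 q.2) upperHalf)
    (hs : ContDiffOn ℝ 1 (fun q : ℝ × ℝ => s q.1 q.2) upperHalf)
    (hT : ContDiffOn ℝ 1 (fun q : ℝ × ℝ => T q.1 q.2) upperHalf)
    (hρpos : 0 < ρ x t) (hTpos : 0 < T x t)
    (u2v pIv : ℝ)
    (hcross : (u x t - u2v)
        * (pIv - (P (T x t) (s x t) + a ^ 2 * (T x t - 1 / ρ x t))) = 0)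
    (halpha : pdt α x t + u2v * pdx α x t = 0)
    (hmass : pdt (fun y r => α y r * ρ y r) x t
        + pdx (fun y r => α y r * ρ y r * u y r) x t = 0)
    (hmom : pdt (fun y r => α y r * ρ y r * u y r) x t
        + pdx (fun y r => α y r * ρ y r * (u y r) ^ 2
            + α y r * (P (T y r) (s y r)
                + a ^ 2 * (T y r - 1 / ρ y r))) x t
        - pIv * pdx α x t = 0)
    (hent : pdt (fun y r => α y r * ρ y r * s y r) x t
        + pdx (fun y r => α y r * ρ y r * s y r * u y r) x t = 0)
    (hTeq : pdt (fun y r => α y r * ρ y r * T y r) x t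
        + pdx (fun y r => α y r * ρ y r * T y r * u y r) x t
        = (1 / ε) * (α x t * ρ x t) * (1 / ρ x t - T x t)) :
    pdt (fun y r => α y r * ρ y r
          * ((u y r) ^ 2 / 2 + e (T y r) (s y r)
            + ((P (T y r) (s y r) + a ^ 2 * (T y r - 1 / ρ y r)) ^ 2
                - (P (T y r) (s y r)) ^ 2) / (2 * a ^ 2))) x t
      + pdx (fun y r => α y r * ρ y r
            * ((u y r) ^ 2 / 2 + e (T y r) (s y r)
              + ((P (T y r) (s y r) + a ^ 2 * (T y r - 1 / ρ y r)) ^ 2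
                  - (P (T y r) (s y r)) ^ 2) / (2 * a ^ 2)) * u y r
          + α y r * (P (T y r) (s y r)
              + a ^ 2 * (T y r - 1 / ρ y r)) * u y r) x t
      - u2v * pIv * pdx α x t
      = -(1 / ε) * (α x t * ρ x t)
          * (a ^ 2 + deriv (fun τ' => P τ' (s x t)) (T x t))
          * (1 / ρ x t - T x t) ^ 2 := by
  have hmem : upperHalf ∈ nhds (x, t) :=
    upperHalf_open.mem_nhds ⟨trivial, ht⟩
  have hρne : ρ x t ≠ 0 := ne_of_gt hρpos
  have hane : a ≠ 0 := ne_of_gt ha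
  have hεne : ε ≠ 0 := ne_of_gt hε
  -- two-variable differentiability at the point
  have dA := ((hα.differentiableOn one_ne_zero).differentiableAt hmem).hasFDerivAt
  have dR := ((hρ.differentiableOn one_ne_zero).differentiableAt hmem).hasFDerivAt
  have dU := ((hu.differentiableOn one_ne_zero).differentiableAt hmem).hasFDerivAt
  have dS := ((hs.differentiableOn one_ne_zero).differentiableAt hmem).hasFDerivAt
  have dT := ((hT.differentiableOn one_ne_zero).differentiableAt hmem).hasFDerivAt
  -- curves
  have cx : HasDerivAt (fun y : ℝ => (y, t)) (((1:ℝ), (0:ℝ))) x :=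
    HasDerivAt.prodMk (hasDerivAt_id x) (hasDerivAt_const x t)
  have ct : HasDerivAt (fun r : ℝ => (x, r)) (((0:ℝ), (1:ℝ))) t :=
    HasDerivAt.prodMk (hasDerivAt_const t x) (hasDerivAt_id t)
  -- slice derivatives of the basic fields
  have hAx : HasDerivAt (fun y => α y t)
      (fderiv ℝ (fun q : ℝ × ℝ => α q.1 q.2) (x, t) (1, 0)) x :=
    by have h := dA.comp_hasDerivAt x cx; exact h
  have hAt : HasDerivAt (fun r => α x r)
      (fderiv ℝ (fun q : ℝ × ℝ => α q.1 q.2) (x, t) (0, 1)) t :=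
    by have h := dA.comp_hasDerivAt t ct; exact h
  have hRx : HasDerivAt (fun y => ρ y t)
      (fderiv ℝ (fun q : ℝ × ℝ => ρ q.1 q.2) (x, t) (1, 0)) x :=
    by have h := dR.comp_hasDerivAt x cx; exact h
  have hRt : HasDerivAt (fun r => ρ x r)
      (fderiv ℝ (fun q : ℝ × ℝ => ρ q.1 q.2) (x, t) (0, 1)) t :=
    by have h := dR.comp_hasDerivAt t ct; exact h
  have hUx : HasDerivAt (fun y => u y t)
      (fderiv ℝ (fun q : ℝ × ℝ => u q.1 q.2) (x, t) (1, 0)) x :=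
    by have h := dU.comp_hasDerivAt x cx; exact h
  have hUt : HasDerivAt (fun r => u x r)
      (fderiv ℝ (fun q : ℝ × ℝ => u q.1 q.2) (x, t) (0, 1)) t :=
    by have h := dU.comp_hasDerivAt t ct; exact h
  have hSx : HasDerivAt (fun y => s y t)
      (fderiv ℝ (fun q : ℝ × ℝ => s q.1 q.2) (x, t) (1, 0)) x :=
    by have h := dS.comp_hasDerivAt x cx; exact h
  have hSt : HasDerivAt (fun r => s x r)
      (fderiv ℝ (fun q : ℝ × ℝ => s q.1 q.2) (x, t) (0, 1)) t :=
    by have h := dS.comp_hasDerivAt t ct; exact h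
  have hTx : HasDerivAt (fun y => T y t)
      (fderiv ℝ (fun q : ℝ × ℝ => T q.1 q.2) (x, t) (1, 0)) x :=
    by have h := dT.comp_hasDerivAt x cx; exact h
  have hTt : HasDerivAt (fun r => T x r)
      (fderiv ℝ (fun q : ℝ × ℝ => T q.1 q.2) (x, t) (0, 1)) t :=
    by have h := dT.comp_hasDerivAt t ct; exact h
  set αx := fderiv ℝ (fun q : ℝ × ℝ => α q.1 q.2) (x, t) (1, 0) with hαx
  set αt := fderiv ℝ (fun q : ℝ × ℝ => α q.1 q.2) (x, t) (0, 1) with hαt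
  set ρx := fderiv ℝ (fun q : ℝ × ℝ => ρ q.1 q.2) (x, t) (1, 0) with hρx
  set ρt := fderiv ℝ (fun q : ℝ × ℝ => ρ q.1 q.2) (x, t) (0, 1) with hρt
  set ux := fderiv ℝ (fun q : ℝ × ℝ => u q.1 q.2) (x, t) (1, 0) with hux
  set ut := fderiv ℝ (fun q : ℝ × ℝ => u q.1 q.2) (x, t) (0, 1) with hut
  set sx := fderiv ℝ (fun q : ℝ × ℝ => s q.1 q.2) (x, t) (1, 0) with hsx
  set st := fderiv ℝ (fun q : ℝ × ℝ => s q.1 q.2) (x, t) (0, 1) with hst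
  set Tx := fderiv ℝ (fun q : ℝ × ℝ => T q.1 q.2) (x, t) (1, 0) with hTx'
  set Tt := fderiv ℝ (fun q : ℝ × ℝ => T q.1 q.2) (x, t) (0, 1) with hTt'
  -- pressure law derivatives
  have dP := (hP (T x t) (s x t) hTpos).hasFDerivAt
  set LP := fderiv ℝ (fun q : ℝ × ℝ => P q.1 q.2) (T x t, s x t) with hLP
  set Pτ := LP (1, 0) with hPτ
  set Ps := LP (0, 1) with hPs
  have hPder : deriv (fun τ' => P τ' (s x t)) (T x t) = Pτ :=
    by have h := (dP.comp_hasDerivAt (T x t)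
      (HasDerivAt.prodMk (hasDerivAt_id (T x t)) (hasDerivAt_const (T x t) (s x t)))).deriv; exact h
  have hPx : HasDerivAt (fun y => P (T y t) (s y t)) (Tx * Pτ + sx * Ps) x := by
    have h := dP.comp_hasDerivAt x (hTx.prodMk hSx)
    rw [clm_pair] at h; exact h
  have hPt : HasDerivAt (fun r => P (T x r) (s x r)) (Tt * Pτ + st * Ps) t := by
    have h := dP.comp_hasDerivAt t (hTt.prodMk hSt)
    rw [clm_pair] at h; exact h
  -- internal energy derivatives
  have dE := ((he (T x t) (s x t) hTpos).1).hasFDerivAt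
  set Le := fderiv ℝ (fun q : ℝ × ℝ => e q.1 q.2) (T x t, s x t) with hLe
  set es := Le (0, 1) with hes
  have heτ : Le (1, 0) = -(P (T x t) (s x t)) :=
    by have h := (dE.comp_hasDerivAt (T x t)
        (HasDerivAt.prodMk (hasDerivAt_id (T x t)) (hasDerivAt_const (T x t) (s x t))))
       exact HasDerivAt.unique h ((he (T x t) (s x t) hTpos).2)
  have hex : HasDerivAt (fun y => e (T y t) (s y t))
      (Tx * (-(P (T x t) (s x t))) + sx * es) x := by
    have h := dE.comp_hasDerivAt x (hTx.prodMk hSx)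
    rw [clm_pair, heτ] at h; exact h
  have het : HasDerivAt (fun r => e (T x r) (s x r))
      (Tt * (-(P (T x t) (s x t))) + st * es) t := by
    have h := dE.comp_hasDerivAt t (hTt.prodMk hSt)
    rw [clm_pair, heτ] at h; exact h
  -- 1/ρ slices
  have hIx : HasDerivAt (fun y => 1 / ρ y t)
      ((0 * ρ x t - 1 * ρx) / ρ x t ^ 2) x :=
    HasDerivAt.div (hasDerivAt_const x (1:ℝ)) hRx hρne
  have hIt : HasDerivAt (fun r => 1 / ρ x r)
      ((0 * ρ x t - 1 * ρt) / ρ x t ^ 2) t :=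
    HasDerivAt.div (hasDerivAt_const t (1:ℝ)) hRt hρne
  -- π slices
  have hπx := hPx.fun_add ((hTx.fun_sub hIx).const_mul (a ^ 2))
  have hπt := hPt.fun_add ((hTt.fun_sub hIt).const_mul (a ^ 2))
  -- energy slices
  have hEx := (((hUx.fun_pow 2).div_const 2).fun_add hex).fun_add
    (((hπx.fun_pow 2).fun_sub (hPx.fun_pow 2)).div_const (2 * a ^ 2))
  have hEt := (((hUt.fun_pow 2).div_const 2).fun_add het).fun_add
    (((hπt.fun_pow 2).fun_sub (hPt.fun_pow 2)).div_const (2 * a ^ 2))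
  -- rewrite all partial derivatives
  simp only [pdt, pdx] at halpha hmass hmom hent hTeq ⊢
  rw [hAx.deriv, hAt.deriv] at halpha
  rw [(hAt.fun_mul hRt).deriv, ((hAx.fun_mul hRx).fun_mul hUx).deriv] at hmass
  rw [((hAt.fun_mul hRt).fun_mul hUt).deriv,
    (((hAx.fun_mul hRx).fun_mul (hUx.fun_pow 2)).fun_add (hAx.fun_mul hπx)).deriv,
    hAx.deriv] at hmom
  rw [((hAt.fun_mul hRt).fun_mul hSt).deriv,
    (((hAx.fun_mul hRx).fun_mul hSx).fun_mul hUx).deriv] at hent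
  rw [((hAt.fun_mul hRt).fun_mul hTt).deriv,
    (((hAx.fun_mul hRx).fun_mul hTx).fun_mul hUx).deriv] at hTeq
  rw [((hAt.fun_mul hRt).fun_mul hEt).deriv,
    ((((hAx.fun_mul hRx).fun_mul hEx).fun_mul hUx).fun_add ((hAx.fun_mul hπx).fun_mul hUx)).deriv,
    hAx.deriv, hPder]
  -- final algebra
  linear_combination (norm := (norm_num; field_simp; ring1))
    (((u x t) ^ 2 / 2 + e (T x t) (s x t)
        + ((P (T x t) (s x t) + a ^ 2 * (T x t - 1 / ρ x t)) ^ 2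
            - (P (T x t) (s x t)) ^ 2) / (2 * a ^ 2))
      - (u x t) ^ 2
      - ((T x t - 1 / ρ x t) * (a ^ 2 + Pτ)) * T x t
      - (es + (T x t - 1 / ρ x t) * Ps) * s x t
      + (P (T x t) (s x t) + a ^ 2 * (T x t - 1 / ρ x t)) / ρ x t) * hmass
    + u x t * hmom
    + (es + (T x t - 1 / ρ x t) * Ps) * hent
    + ((T x t - 1 / ρ x t) * (a ^ 2 + Pτ)) * hTeq
    - (P (T x t) (s x t) + a ^ 2 * (T x t - 1 / ρ x t)) * halpha
    + αx * hcross

/-- classical solutions of the Suliciu relaxation system with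
the stiff source `(1/ε)α_kρ_k(τ_k − 𝒯_k)` satisfy the phasic energy balances
`∂_t(α_kρ_kℰ_k) + ∂_x(α_kρ_kℰ_ku_k + α_kπ_ku_k) − u₂π₁∂_xα_k
  = −(1/ε)α_kρ_k(a_k² + ∂_τ𝒫_k(𝒯_k,s_k))(τ_k − 𝒯_k)²`,
whose right-hand sides are nonpositive under Whitham's condition
`a_k² > −∂_τ𝒫_k(𝒯_k,s_k)`. -/
theorem relaxation_phasic_energy_balance_with_source
    (a₁ a₂ ε : ℝ) (ha₁ : 0 < a₁) (ha₂ : 0 < a₂) (hε : 0 < ε)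
    (P₁ P₂ e₁ e₂ : ℝ → ℝ → ℝ)
    (hP₁ : ∀ τ σ : ℝ, 0 < τ →
      DifferentiableAt ℝ (fun q : ℝ × ℝ => P₁ q.1 q.2) (τ, σ))
    (hP₂ : ∀ τ σ : ℝ, 0 < τ →
      DifferentiableAt ℝ (fun q : ℝ × ℝ => P₂ q.1 q.2) (τ, σ))
    (he₁ : ∀ τ σ : ℝ, 0 < τ →
      DifferentiableAt ℝ (fun q : ℝ × ℝ => e₁ q.1 q.2) (τ, σ)
        ∧ HasDerivAt (fun τ' => e₁ τ' σ) (-(P₁ τ σ)) τ)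
    (he₂ : ∀ τ σ : ℝ, 0 < τ →
      DifferentiableAt ℝ (fun q : ℝ × ℝ => e₂ q.1 q.2) (τ, σ)
        ∧ HasDerivAt (fun τ' => e₂ τ' σ) (-(P₂ τ σ)) τ)
    (α₁ ρ₁ ρ₂ u₁ u₂ s₁ s₂ T₁ T₂ : ℝ → ℝ → ℝ)
    (hα₁ : ContDiffOn ℝ 1 (fun q : ℝ × ℝ => α₁ q.1 q.2) upperHalf)
    (hρ₁ : ContDiffOn ℝ 1 (fun q : ℝ × ℝ => ρ₁ q.1 q.2) upperHalf)
    (hρ₂ : ContDiffOn ℝ 1 (fun q : ℝ × ℝ => ρ₂ q.1 q.2) upperHalf)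
    (hu₁ : ContDiffOn ℝ 1 (fun q : ℝ × ℝ => u₁ q.1 q.2) upperHalf)
    (hu₂ : ContDiffOn ℝ 1 (fun q : ℝ × ℝ => u₂ q.1 q.2) upperHalf)
    (hs₁ : ContDiffOn ℝ 1 (fun q : ℝ × ℝ => s₁ q.1 q.2) upperHalf)
    (hs₂ : ContDiffOn ℝ 1 (fun q : ℝ × ℝ => s₂ q.1 q.2) upperHalf)
    (hT₁ : ContDiffOn ℝ 1 (fun q : ℝ × ℝ => T₁ q.1 q.2) upperHalf)
    (hT₂ : ContDiffOn ℝ 1 (fun q : ℝ × ℝ => T₂ q.1 q.2) upperHalf)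
    (hadm : ∀ x t : ℝ, 0 < t →
      0 < α₁ x t ∧ α₁ x t < 1 ∧ 0 < ρ₁ x t ∧ 0 < ρ₂ x t
        ∧ 0 < T₁ x t ∧ 0 < T₂ x t)
    -- phase fraction equation
    (halpha : ∀ x t : ℝ, 0 < t → pdt α₁ x t + u₂ x t * pdx α₁ x t = 0)
    -- mass conservation, k = 1, 2
    (hmass₁ : ∀ x t : ℝ, 0 < t →
      pdt (fun y r => α₁ y r * ρ₁ y r) x t
        + pdx (fun y r => α₁ y r * ρ₁ y r * u₁ y r) x t = 0)
    (hmass₂ : ∀ x t : ℝ, 0 < t →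
      pdt (fun y r => (1 - α₁ y r) * ρ₂ y r) x t
        + pdx (fun y r => (1 - α₁ y r) * ρ₂ y r * u₂ y r) x t = 0)
    -- momentum balance with the linearized pressures, k = 1, 2
    (hmom₁ : ∀ x t : ℝ, 0 < t →
      pdt (fun y r => α₁ y r * ρ₁ y r * u₁ y r) x t
        + pdx (fun y r => α₁ y r * ρ₁ y r * (u₁ y r) ^ 2
            + α₁ y r * (P₁ (T₁ y r) (s₁ y r)
                + a₁ ^ 2 * (T₁ y r - 1 / ρ₁ y r))) x t
        - (P₁ (T₁ x t) (s₁ x t) + a₁ ^ 2 * (T₁ x t - 1 / ρ₁ x t))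
            * pdx α₁ x t = 0)
    (hmom₂ : ∀ x t : ℝ, 0 < t →
      pdt (fun y r => (1 - α₁ y r) * ρ₂ y r * u₂ y r) x t
        + pdx (fun y r => (1 - α₁ y r) * ρ₂ y r * (u₂ y r) ^ 2
            + (1 - α₁ y r) * (P₂ (T₂ y r) (s₂ y r)
                + a₂ ^ 2 * (T₂ y r - 1 / ρ₂ y r))) x t
        - (P₁ (T₁ x t) (s₁ x t) + a₁ ^ 2 * (T₁ x t - 1 / ρ₁ x t))
            * pdx (fun y r => 1 - α₁ y r) x t = 0)
    -- entropy conservation, k = 1, 2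
    (hent₁ : ∀ x t : ℝ, 0 < t →
      pdt (fun y r => α₁ y r * ρ₁ y r * s₁ y r) x t
        + pdx (fun y r => α₁ y r * ρ₁ y r * s₁ y r * u₁ y r) x t = 0)
    (hent₂ : ∀ x t : ℝ, 0 < t →
      pdt (fun y r => (1 - α₁ y r) * ρ₂ y r * s₂ y r) x t
        + pdx (fun y r => (1 - α₁ y r) * ρ₂ y r * s₂ y r * u₂ y r) x t = 0)
    -- relaxed specific volumes with stiff relaxation source, k = 1, 2
    (hTeq₁ : ∀ x t : ℝ, 0 < t →
      pdt (fun y r => α₁ y r * ρ₁ y r * T₁ y r) x t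
        + pdx (fun y r => α₁ y r * ρ₁ y r * T₁ y r * u₁ y r) x t
        = (1 / ε) * (α₁ x t * ρ₁ x t) * (1 / ρ₁ x t - T₁ x t))
    (hTeq₂ : ∀ x t : ℝ, 0 < t →
      pdt (fun y r => (1 - α₁ y r) * ρ₂ y r * T₂ y r) x t
        + pdx (fun y r => (1 - α₁ y r) * ρ₂ y r * T₂ y r * u₂ y r) x t
        = (1 / ε) * ((1 - α₁ x t) * ρ₂ x t) * (1 / ρ₂ x t - T₂ x t)) :
    ∀ x t : ℝ, 0 < t →
      -- phase 1 energy balance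
      (pdt (fun y r => α₁ y r * ρ₁ y r
            * ((u₁ y r) ^ 2 / 2 + e₁ (T₁ y r) (s₁ y r)
              + ((P₁ (T₁ y r) (s₁ y r) + a₁ ^ 2 * (T₁ y r - 1 / ρ₁ y r)) ^ 2
                  - (P₁ (T₁ y r) (s₁ y r)) ^ 2) / (2 * a₁ ^ 2))) x t
        + pdx (fun y r => α₁ y r * ρ₁ y r
              * ((u₁ y r) ^ 2 / 2 + e₁ (T₁ y r) (s₁ y r)
                + ((P₁ (T₁ y r) (s₁ y r) + a₁ ^ 2 * (T₁ y r - 1 / ρ₁ y r)) ^ 2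
                    - (P₁ (T₁ y r) (s₁ y r)) ^ 2) / (2 * a₁ ^ 2)) * u₁ y r
            + α₁ y r * (P₁ (T₁ y r) (s₁ y r)
                + a₁ ^ 2 * (T₁ y r - 1 / ρ₁ y r)) * u₁ y r) x t
        - u₂ x t * (P₁ (T₁ x t) (s₁ x t) + a₁ ^ 2 * (T₁ x t - 1 / ρ₁ x t))
            * pdx α₁ x t
        = -(1 / ε) * (α₁ x t * ρ₁ x t)
            * (a₁ ^ 2 + deriv (fun τ' => P₁ τ' (s₁ x t)) (T₁ x t))
            * (1 / ρ₁ x t - T₁ x t) ^ 2)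
      -- phase 2 energy balance
      ∧ (pdt (fun y r => (1 - α₁ y r) * ρ₂ y r
            * ((u₂ y r) ^ 2 / 2 + e₂ (T₂ y r) (s₂ y r)
              + ((P₂ (T₂ y r) (s₂ y r) + a₂ ^ 2 * (T₂ y r - 1 / ρ₂ y r)) ^ 2
                  - (P₂ (T₂ y r) (s₂ y r)) ^ 2) / (2 * a₂ ^ 2))) x t
        + pdx (fun y r => (1 - α₁ y r) * ρ₂ y r
              * ((u₂ y r) ^ 2 / 2 + e₂ (T₂ y r) (s₂ y r)
                + ((P₂ (T₂ y r) (s₂ y r) + a₂ ^ 2 * (T₂ y r - 1 / ρ₂ y r)) ^ 2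
                    - (P₂ (T₂ y r) (s₂ y r)) ^ 2) / (2 * a₂ ^ 2)) * u₂ y r
            + (1 - α₁ y r) * (P₂ (T₂ y r) (s₂ y r)
                + a₂ ^ 2 * (T₂ y r - 1 / ρ₂ y r)) * u₂ y r) x t
        - u₂ x t * (P₁ (T₁ x t) (s₁ x t) + a₁ ^ 2 * (T₁ x t - 1 / ρ₁ x t))
            * pdx (fun y r => 1 - α₁ y r) x t
        = -(1 / ε) * ((1 - α₁ x t) * ρ₂ x t)
            * (a₂ ^ 2 + deriv (fun τ' => P₂ τ' (s₂ x t)) (T₂ x t))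
            * (1 / ρ₂ x t - T₂ x t) ^ 2)
      -- in particular, the right-hand sides are nonpositive under Whitham's condition
      ∧ (a₁ ^ 2 > -deriv (fun τ' => P₁ τ' (s₁ x t)) (T₁ x t) →
          -(1 / ε) * (α₁ x t * ρ₁ x t)
              * (a₁ ^ 2 + deriv (fun τ' => P₁ τ' (s₁ x t)) (T₁ x t))
              * (1 / ρ₁ x t - T₁ x t) ^ 2 ≤ 0)
      ∧ (a₂ ^ 2 > -deriv (fun τ' => P₂ τ' (s₂ x t)) (T₂ x t) →
          -(1 / ε) * ((1 - α₁ x t) * ρ₂ x t)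
              * (a₂ ^ 2 + deriv (fun τ' => P₂ τ' (s₂ x t)) (T₂ x t))
              * (1 / ρ₂ x t - T₂ x t) ^ 2 ≤ 0) := by
  intro x t ht
  obtain ⟨hα1p, hα1lt, hρ1p, hρ2p, hT1p, hT2p⟩ := hadm x t ht
  have hmem : upperHalf ∈ nhds (x, t) := upperHalf_open.mem_nhds ⟨trivial, ht⟩
  have dA := ((hα₁.differentiableOn one_ne_zero).differentiableAt hmem).hasFDerivAt
  have cx : HasDerivAt (fun y : ℝ => (y, t)) (((1:ℝ), (0:ℝ))) x :=
    HasDerivAt.prodMk (hasDerivAt_id x) (hasDerivAt_const x t)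
  have ct : HasDerivAt (fun r : ℝ => (x, r)) (((0:ℝ), (1:ℝ))) t :=
    HasDerivAt.prodMk (hasDerivAt_const t x) (hasDerivAt_id t)
  have hAx : HasDerivAt (fun y => α₁ y t)
      (fderiv ℝ (fun q : ℝ × ℝ => α₁ q.1 q.2) (x, t) (1, 0)) x :=
    by have h := dA.comp_hasDerivAt x cx; exact h
  have hAt : HasDerivAt (fun r => α₁ x r)
      (fderiv ℝ (fun q : ℝ × ℝ => α₁ q.1 q.2) (x, t) (0, 1)) t :=
    by have h := dA.comp_hasDerivAt t ct; exact h
  have halpha2 : pdt (fun y r => 1 - α₁ y r) x t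
      + u₂ x t * pdx (fun y r => 1 - α₁ y r) x t = 0 := by
    have h := halpha x t ht
    simp only [pdt, pdx] at h ⊢
    rw [(HasDerivAt.fun_sub (hasDerivAt_const t (1:ℝ)) hAt).deriv,
      (HasDerivAt.fun_sub (hasDerivAt_const x (1:ℝ)) hAx).deriv]
    rw [hAt.deriv, hAx.deriv] at h
    linarith
  have P1 := phase_balance a₁ ε ha₁ hε P₁ e₁ hP₁ he₁ α₁ ρ₁ u₁ s₁ T₁ x t ht
    hα₁ hρ₁ hu₁ hs₁ hT₁ hρ1p hT1p (u₂ x t)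
    (P₁ (T₁ x t) (s₁ x t) + a₁ ^ 2 * (T₁ x t - 1 / ρ₁ x t))
    (by ring) (halpha x t ht) (hmass₁ x t ht) (hmom₁ x t ht)
    (hent₁ x t ht) (hTeq₁ x t ht)
  have P2 := phase_balance a₂ ε ha₂ hε P₂ e₂ hP₂ he₂
    (fun y r => 1 - α₁ y r) ρ₂ u₂ s₂ T₂ x t ht
    (by exact contDiffOn_const.sub hα₁) hρ₂ hu₂ hs₂ hT₂ hρ2p hT2p (u₂ x t)
    (P₁ (T₁ x t) (s₁ x t) + a₁ ^ 2 * (T₁ x t - 1 / ρ₁ x t))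
    (by ring) halpha2 (by exact hmass₂ x t ht) (by exact hmom₂ x t ht)
    (by exact hent₂ x t ht) (by exact hTeq₂ x t ht)
  refine ⟨P1, by exact P2, ?_, ?_⟩
  · intro h
    have hm : 0 < α₁ x t * ρ₁ x t := mul_pos hα1p hρ1p
    have hc : 0 ≤ a₁ ^ 2 + deriv (fun τ' => P₁ τ' (s₁ x t)) (T₁ x t) := by linarith
    have h0 : 0 ≤ (1 / ε) * (α₁ x t * ρ₁ x t)
        * (a₁ ^ 2 + deriv (fun τ' => P₁ τ' (s₁ x t)) (T₁ x t))
        * (1 / ρ₁ x t - T₁ x t) ^ 2 :=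
      mul_nonneg (mul_nonneg (mul_nonneg (le_of_lt (one_div_pos.mpr hε)) hm.le) hc)
        (sq_nonneg _)
    nlinarith [h0]
  · intro h
    have hm : 0 < (1 - α₁ x t) * ρ₂ x t := mul_pos (by linarith) hρ2p
    have hc : 0 ≤ a₂ ^ 2 + deriv (fun τ' => P₂ τ' (s₂ x t)) (T₂ x t) := by linarith
    have h0 : 0 ≤ (1 / ε) * ((1 - α₁ x t) * ρ₂ x t)
        * (a₂ ^ 2 + deriv (fun τ' => P₂ τ' (s₂ x t)) (T₂ x t))
        * (1 / ρ₂ x t - T₂ x t) ^ 2 :=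
      mul_nonneg (mul_nonneg (mul_nonneg (le_of_lt (one_div_pos.mpr hε)) hm.le) hc)
        (sq_nonneg _)
    nlinarith [h0]
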